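/- For the unit ball D = {Σ|w_j|² + Σ|z_j|² < 1} ⊂ ℂ^{m+n} with the S¹-action rotating the z-coordinates, the function μ = −((n+1)/2) · (1 − Σ_{j=1}^m |w_j|²) / (1 − Σ_j |w_j|² − Σ_j |z_j|²) satisfies dμ = ι_ξ Ω, where Ω = (√-1/2) ∂∂̄ log K and K(w,z) = (n!/πⁿ) (1 − Σ|w_j|²)/(1 − Σ|w_j|² − Σ|z_j|²)^{n+1} is the Bergman kernel of the slice; moreover the moment maps μ_D, μ_{Dᵐ} of the Bergman metrics of D and the ball Dᵐ satisfy the multiplicative relation μ_D = −(2(m+n+1)/((m+1)(n+1))) μ_{Dᵐ} · μ. -/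

import Mathlib

set_option synthInstance.maxHeartbeats 1000000
set_option maxHeartbeats 1000000
set_option maxSynthPendingDepth 3

open Module LinearMap

noncomputable section

/-- the model space `ℂ^m × ℂ^n` (coordinates `w`, `z`) -/
abbrev P (m n : ℕ) := (Fin m → ℂ) × (Fin n → ℂ)

variable {m n : ℕ}

/-- the Wirtinger derivative `∂_v f` of `f` at `p` in the (complexified) direction `v`:
`(1/2)(∂_v − i ∂_{iv})` -/
def Wz (f : P m n → ℂ) (p v : P m n) : ℂ :=
  (1 / 2) * (fderiv ℝ f p v - Complex.I * fderiv ℝ f p (Complex.I • v))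

/-- the conjugate Wirtinger derivative `∂̄_v f`: `(1/2)(∂_v + i ∂_{iv})` -/
def Wzbar (f : P m n → ℂ) (p v : P m n) : ℂ :=
  (1 / 2) * (fderiv ℝ f p v + Complex.I * fderiv ℝ f p (Complex.I • v))

/-- the complex Hessian `∂_u ∂̄_v f` at `p` -/
def cHess (f : P m n → ℂ) (p u v : P m n) : ℂ :=
  Wz (fun q => Wzbar f q v) p u

/-- the Kähler-type 2-form `Ω = (√-1/2) ∂∂̄ f`, evaluated on tangent vectors `u`, `v` -/
def Om (f : P m n → ℂ) (p u v : P m n) : ℂ :=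
  (Complex.I / 2) * (cHess f p u v - cHess f p v u)

/-- the fundamental vector field `ξ = √-1 Σ_j (z_j ∂/∂z_j − z̄_j ∂/∂z̄_j)` of the
`S¹`-action rotating the `z`-coordinates, i.e. `p ↦ (0, i z)` -/
def xiS1 (p : P m n) : P m n := ((0 : Fin m → ℂ), fun j => Complex.I * p.2 j)

/-- the `j`-th coordinate direction in the `z`-factor -/
def ez (m : ℕ) {n : ℕ} (j : Fin n) : P m n := ((0 : Fin m → ℂ), Pi.single j 1)

/-- the `S¹`-action `e^{iθ}·(w,z) = (w, e^{iθ}z)` -/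
def rotz (θ : ℝ) (p : P m n) : P m n :=
  (p.1, fun j => Complex.exp (θ * Complex.I) * p.2 j)

/-- the full torus action of `T^{m+n}` on `ℂ^{m+n}` -/
def rotT (θ : Fin m → ℝ) (ψ : Fin n → ℝ) (p : P m n) : P m n :=
  (fun i => Complex.exp (θ i * Complex.I) * p.1 i,
   fun j => Complex.exp (ψ j * Complex.I) * p.2 j)


section AuxBergman
open Complex

def cw (i : Fin m) : P m n →L[ℝ] ℂ :=
  (ContinuousLinearMap.proj i).comp (ContinuousLinearMap.fst ℝ (Fin m → ℂ) (Fin n → ℂ))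
def cz (j : Fin n) : P m n →L[ℝ] ℂ :=
  (ContinuousLinearMap.proj j).comp (ContinuousLinearMap.snd ℝ (Fin m → ℂ) (Fin n → ℂ))

@[simp] lemma cw_apply (i : Fin m) (w : P m n) : cw i w = w.1 i := rfl
@[simp] lemma cz_apply (j : Fin n) (w : P m n) : cz j w = w.2 j := rfl

def Amap (q : P m n) : P m n →L[ℝ] ℂ := ∑ i, (starRingEnd ℂ (q.1 i)) • cw i
def Bmap (q : P m n) : P m n →L[ℝ] ℂ := ∑ j, (starRingEnd ℂ (q.2 j)) • cz j

@[simp] lemma Amap_apply (q w : P m n) :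
    Amap q w = ∑ i, (starRingEnd ℂ) (q.1 i) * w.1 i := by
  simp [Amap]
@[simp] lemma Bmap_apply (q w : P m n) :
    Bmap q w = ∑ j, (starRingEnd ℂ) (q.2 j) * w.2 j := by
  simp [Bmap]

lemma hasFDerivAt_normSq (z : ℂ) : HasFDerivAt Complex.normSq
    ((2*z.re) • Complex.reCLM + (2*z.im) • Complex.imCLM) z := by
  have h : (Complex.normSq : ℂ → ℝ) = fun w => w.re*w.re + w.im*w.im := by
    funext w; simp [Complex.normSq_apply]
  rw [h]
  have hre : HasFDerivAt (fun w : ℂ => w.re) Complex.reCLM z := Complex.reCLM.hasFDerivAt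
  have him : HasFDerivAt (fun w : ℂ => w.im) Complex.imCLM z := Complex.imCLM.hasFDerivAt
  have := (hre.mul hre).add (him.mul him)
  refine this.congr_fderiv (Eq.symm ?_)
  ext w; simp; ring

lemma hasFDerivAt_S (q : P m n) :
    HasFDerivAt (fun q : P m n => ∑ i, Complex.normSq (q.1 i))
      ((2:ℝ) • (Complex.reCLM.comp (Amap q))) q := by
  have h := HasFDerivAt.fun_sum (u := (Finset.univ : Finset (Fin m)))
    (fun i _ => ((hasFDerivAt_normSq (q.1 i)).comp q (cw i).hasFDerivAt))
  refine h.congr_fderiv (Eq.symm ?_)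
  refine ContinuousLinearMap.ext fun w => ?_
  simp [Complex.mul_re, Finset.mul_sum, Finset.sum_add_distrib]
  rw [mul_add, Finset.mul_sum, Finset.mul_sum]
  congr 1 <;> exact Finset.sum_congr rfl fun i _ => by ring

lemma hasFDerivAt_T (q : P m n) :
    HasFDerivAt (fun q : P m n => ∑ j, Complex.normSq (q.2 j))
      ((2:ℝ) • (Complex.reCLM.comp (Bmap q))) q := by
  have h := HasFDerivAt.fun_sum (u := (Finset.univ : Finset (Fin n)))
    (fun j _ => ((hasFDerivAt_normSq (q.2 j)).comp q (cz j).hasFDerivAt))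
  refine h.congr_fderiv (Eq.symm ?_)
  refine ContinuousLinearMap.ext fun w => ?_
  simp [Complex.mul_re, Finset.mul_sum, Finset.sum_add_distrib]
  rw [mul_add, Finset.mul_sum, Finset.mul_sum]
  congr 1 <;> exact Finset.sum_congr rfl fun j _ => by ring

def gf (q : P m n) : ℝ := 1 - ∑ i, Complex.normSq (q.1 i)
def hf (q : P m n) : ℝ := 1 - ∑ i, Complex.normSq (q.1 i) - ∑ j, Complex.normSq (q.2 j)

lemma hasFDerivAt_gf (q : P m n) :
    HasFDerivAt gf (-((2:ℝ) • (Complex.reCLM.comp (Amap q)))) q := by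
  have h := (hasFDerivAt_const (1:ℝ) q).fun_sub (hasFDerivAt_S q)
  simp only [zero_sub] at h
  exact h

lemma hasFDerivAt_hf (q : P m n) :
    HasFDerivAt hf (-((2:ℝ) • (Complex.reCLM.comp (Amap q))) - (2:ℝ) • (Complex.reCLM.comp (Bmap q))) q := by
  exact (hasFDerivAt_gf q).sub (hasFDerivAt_T q)

-- Step I : derivative of μ
lemma fderiv_mu (c : ℝ) (p : P m n) (hH : hf p ≠ 0) (v : P m n) :
    fderiv ℝ (fun q : P m n => c * gf q / hf q) p v =
      (c * (-(2*(Amap p v).re)) * hf p -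
        c * gf p * (-(2*(Amap p v).re) - 2*(Bmap p v).re)) / (hf p)^2 := by
  have h1 : HasFDerivAt (fun q : P m n => c * gf q) (c • (-((2:ℝ) • (Complex.reCLM.comp (Amap p))))) p :=
    (hasFDerivAt_gf p).const_mul c
  have hinv : HasFDerivAt (fun q : P m n => (hf q)⁻¹)
      (((ContinuousLinearMap.smulRight (1 : ℝ →L[ℝ] ℝ) (-((hf p) ^ 2)⁻¹)).comp
        (-((2:ℝ) • (Complex.reCLM.comp (Amap p))) - (2:ℝ) • (Complex.reCLM.comp (Bmap p))))) p :=
    (hasFDerivAt_inv hH).comp p (hasFDerivAt_hf p)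
  simp only [div_eq_mul_inv]
  rw [(h1.fun_mul hinv).fderiv]
  simp only [ContinuousLinearMap.add_apply, ContinuousLinearMap.coe_comp',
    ContinuousLinearMap.coe_smul', ContinuousLinearMap.smul_apply, ContinuousLinearMap.neg_apply,
    ContinuousLinearMap.sub_apply, ContinuousLinearMap.smulRight_apply,
    ContinuousLinearMap.one_apply, Complex.reCLM_apply, Function.comp_apply, smul_eq_mul,
    Pi.smul_apply]
  field_simp
  ring

lemma gf_pos {q : P m n} (hq : 0 < hf q) : 0 < gf q := by
  have h : (0:ℝ) ≤ ∑ j, Complex.normSq (q.2 j) :=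
    Finset.sum_nonneg fun j _ => Complex.normSq_nonneg _
  unfold gf hf at *; linarith

lemma hf_cont : Continuous (hf : P m n → ℝ) :=
  continuous_iff_continuousAt.mpr fun q => (hasFDerivAt_hf q).continuousAt

lemma isOpen_U : IsOpen {q : P m n | 0 < hf q} := isOpen_lt continuous_const hf_cont

lemma key1 (C : ℝ) (hC : 0 < C) {q : P m n} (hq : 0 < hf q) (w : P m n) :
    fderiv ℝ (fun q : P m n => ((Real.log (C * gf q / hf q ^ (n+1)) : ℝ) : ℂ)) q w =
      ((-(2*(Amap q w).re)/gf q + (n+1)*(2*((Amap q w).re+(Bmap q w).re))/hf q : ℝ) : ℂ) := by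
  have hgq : 0 < gf q := gf_pos hq
  have heq : (fun q : P m n => ((Real.log (C * gf q / hf q ^ (n+1)) : ℝ) : ℂ)) =ᶠ[nhds q]
      (fun q : P m n => ((Real.log C + Real.log (gf q) - (n+1) * Real.log (hf q) : ℝ) : ℂ)) := by
    filter_upwards [isOpen_U.mem_nhds hq] with x hx
    have hgx : 0 < gf x := gf_pos hx
    norm_cast
    rw [Real.log_div (by positivity) (by positivity),
      Real.log_mul (ne_of_gt hC) (ne_of_gt hgx), Real.log_pow]
    all_goals (push_cast; ring)
  have hlogg : HasFDerivAt (fun q : P m n => Real.log (gf q))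
      ((gf q)⁻¹ • (-((2:ℝ) • (Complex.reCLM.comp (Amap q))))) q :=
    (hasFDerivAt_gf q).log (ne_of_gt hgq)
  have hlogh : HasFDerivAt (fun q : P m n => Real.log (hf q))
      ((hf q)⁻¹ • (-((2:ℝ) • (Complex.reCLM.comp (Amap q))) - (2:ℝ) • (Complex.reCLM.comp (Bmap q)))) q :=
    (hasFDerivAt_hf q).log (ne_of_gt hq)
  have hreal : HasFDerivAt (fun q : P m n => Real.log C + Real.log (gf q) - (n+1) * Real.log (hf q))
      (((gf q)⁻¹ • (-((2:ℝ) • (Complex.reCLM.comp (Amap q))))) -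
        ((n+1:ℝ) • ((hf q)⁻¹ • (-((2:ℝ) • (Complex.reCLM.comp (Amap q))) - (2:ℝ) • (Complex.reCLM.comp (Bmap q)))))) q := by
    simpa using ((hasFDerivAt_const (Real.log C) q).fun_add hlogg).fun_sub (hlogh.const_mul ((n:ℝ)+1))
  have hcomp := Complex.ofRealCLM.hasFDerivAt.comp q hreal
  have hcomp' : HasFDerivAt
      (fun q : P m n => ((Real.log C + Real.log (gf q) - ((n:ℝ)+1) * Real.log (hf q) : ℝ) : ℂ))
      (Complex.ofRealCLM.comp
        (((gf q)⁻¹ • (-((2:ℝ) • (Complex.reCLM.comp (Amap q))))) -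
          ((n+1:ℝ) • ((hf q)⁻¹ • (-((2:ℝ) • (Complex.reCLM.comp (Amap q))) - (2:ℝ) • (Complex.reCLM.comp (Bmap q))))))) q := hcomp
  rw [Filter.EventuallyEq.fderiv_eq heq, hcomp'.fderiv]
  simp only [ContinuousLinearMap.coe_comp', Function.comp_apply, ContinuousLinearMap.coe_sub',
    Pi.sub_apply, ContinuousLinearMap.coe_smul', Pi.smul_apply, ContinuousLinearMap.neg_apply,
    ContinuousLinearMap.smul_apply, Complex.reCLM_apply, smul_eq_mul, Complex.ofRealCLM_apply]
  norm_cast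
  field_simp
  ring

lemma Amap_smul_I (q v : P m n) : Amap q (Complex.I • v) = Complex.I * Amap q v := by
  simp [Finset.mul_sum]
  exact Finset.sum_congr rfl fun i _ => by ring

lemma Bmap_smul_I (q v : P m n) : Bmap q (Complex.I • v) = Complex.I * Bmap q v := by
  simp [Finset.mul_sum]
  exact Finset.sum_congr rfl fun j _ => by ring

lemma key2 (C : ℝ) (hC : 0 < C) {q : P m n} (hq : 0 < hf q) (v : P m n) :
    Wzbar (fun q : P m n => ((Real.log (C * gf q / hf q ^ (n+1)) : ℝ) : ℂ)) q v =
      -((starRingEnd ℂ) (Amap q v))/(gf q : ℂ)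
        + ((n:ℂ)+1) * ((starRingEnd ℂ) (Amap q v) + (starRingEnd ℂ) (Bmap q v))/(hf q : ℂ) := by
  have hgq := gf_pos hq
  rw [Wzbar, key1 C hC hq v, key1 C hC hq (Complex.I • v), Amap_smul_I, Bmap_smul_I]
  have hconj : ∀ z : ℂ, (starRingEnd ℂ) z = (z.re:ℂ) - (z.im:ℂ)*Complex.I :=
    fun z => by simp [Complex.ext_iff]
  rw [hconj, hconj]
  push_cast
  simp only [Complex.mul_re, Complex.I_re, Complex.I_im]
  have h1 : ((gf q : ℝ):ℂ) ≠ 0 := Complex.ofReal_ne_zero.mpr (ne_of_gt hgq)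
  have h2 : ((hf q : ℝ):ℂ) ≠ 0 := Complex.ofReal_ne_zero.mpr (ne_of_gt hq)
  field_simp
  push_cast
  ring

lemma conj_Amap (q v : P m n) : (starRingEnd ℂ) (Amap q v) = Amap v q := by
  simp [map_sum]
  exact Finset.sum_congr rfl fun i _ => by ring

lemma conj_Bmap (q v : P m n) : (starRingEnd ℂ) (Bmap q v) = Bmap v q := by
  simp [map_sum]
  exact Finset.sum_congr rfl fun j _ => by ring

lemma keyHess (C : ℝ) (hC : 0 < C) {p : P m n} (hp : 0 < hf p) (u v : P m n) :
    cHess (fun q : P m n => ((Real.log (C * gf q / hf q ^ (n+1)) : ℝ) : ℂ)) p u v =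
      -( Amap v u / (gf p:ℂ) + (Amap v p) * (Amap p u) / (gf p:ℂ)^2 )
        + ((n:ℂ)+1) * ( (Amap v u + Bmap v u) / (hf p:ℂ)
            + (Amap v p + Bmap v p) * (Amap p u + Bmap p u) / (hf p:ℂ)^2 ) := by
  have hgp := gf_pos hp
  have hgne : ((gf p : ℝ):ℂ) ≠ 0 := Complex.ofReal_ne_zero.mpr (ne_of_gt hgp)
  have hhne : ((hf p : ℝ):ℂ) ≠ 0 := Complex.ofReal_ne_zero.mpr (ne_of_gt hp)
  -- the eventual form of Wzbar
  have hev : (fun q => Wzbar (fun q : P m n => ((Real.log (C * gf q / hf q ^ (n+1)) : ℝ) : ℂ)) q v)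
      =ᶠ[nhds p] (fun q : P m n =>
        -(Amap v q) * ((gf q : ℝ):ℂ)⁻¹
          + ((n:ℂ)+1) * ((Amap v q + Bmap v q) * ((hf q : ℝ):ℂ)⁻¹)) := by
    filter_upwards [isOpen_U.mem_nhds hp] with x hx
    rw [key2 C hC hx v, conj_Amap, conj_Bmap]
    field_simp
  -- derivative of the explicit form
  have hgC : HasFDerivAt (fun q : P m n => ((gf q : ℝ):ℂ))
      (Complex.ofRealCLM.comp (-((2:ℝ) • (Complex.reCLM.comp (Amap p))))) p :=
    Complex.ofRealCLM.hasFDerivAt.comp p (hasFDerivAt_gf p)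
  have hhC : HasFDerivAt (fun q : P m n => ((hf q : ℝ):ℂ))
      (Complex.ofRealCLM.comp (-((2:ℝ) • (Complex.reCLM.comp (Amap p))) - (2:ℝ) • (Complex.reCLM.comp (Bmap p)))) p :=
    Complex.ofRealCLM.hasFDerivAt.comp p (hasFDerivAt_hf p)
  have hginv : HasFDerivAt (fun q : P m n => ((gf q : ℝ):ℂ)⁻¹)
      (((ContinuousLinearMap.smulRight (1 : ℂ →L[ℂ] ℂ) (-(((gf p : ℝ):ℂ) ^ 2)⁻¹)).restrictScalars ℝ).comp
        (Complex.ofRealCLM.comp (-((2:ℝ) • (Complex.reCLM.comp (Amap p)))))) p :=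
    ((hasFDerivAt_inv hgne).restrictScalars ℝ).comp p hgC
  have hhinv : HasFDerivAt (fun q : P m n => ((hf q : ℝ):ℂ)⁻¹)
      (((ContinuousLinearMap.smulRight (1 : ℂ →L[ℂ] ℂ) (-(((hf p : ℝ):ℂ) ^ 2)⁻¹)).restrictScalars ℝ).comp
        (Complex.ofRealCLM.comp (-((2:ℝ) • (Complex.reCLM.comp (Amap p))) - (2:ℝ) • (Complex.reCLM.comp (Bmap p))))) p :=
    ((hasFDerivAt_inv hhne).restrictScalars ℝ).comp p hhC
  have h1 := ((Amap v).hasFDerivAt (x := p)).fun_neg.fun_mul hginv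
  have h2 := ((((Amap v).hasFDerivAt (x := p)).fun_add ((Bmap v).hasFDerivAt (x := p))).fun_mul hhinv).const_mul ((n:ℂ)+1)
  have htot := h1.fun_add h2
  have hD : ∀ w : P m n,
      fderiv ℝ (fun q : P m n =>
        -(Amap v q) * ((gf q : ℝ):ℂ)⁻¹
          + ((n:ℂ)+1) * ((Amap v q + Bmap v q) * ((hf q : ℝ):ℂ)⁻¹)) p w =
      -(Amap v w) / (gf p:ℂ)
        - (Amap v p) * (((2*(Amap p w).re : ℝ):ℂ)) / (gf p:ℂ)^2
        + ((n:ℂ)+1) * ((Amap v w + Bmap v w) / (hf p:ℂ)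
          + (Amap v p + Bmap v p) * (((2*((Amap p w).re + (Bmap p w).re) : ℝ):ℂ)) / (hf p:ℂ)^2) := by
    intro w
    rw [htot.fderiv]
    simp only [ContinuousLinearMap.add_apply, ContinuousLinearMap.coe_comp',
      Function.comp_apply, ContinuousLinearMap.coe_smul', Pi.smul_apply,
      ContinuousLinearMap.neg_apply, ContinuousLinearMap.smul_apply,
      ContinuousLinearMap.coe_sub', Pi.sub_apply, ContinuousLinearMap.coe_restrictScalars',
      ContinuousLinearMap.smulRight_apply, ContinuousLinearMap.one_apply,
      Complex.reCLM_apply, Complex.ofRealCLM_apply, smul_eq_mul, Complex.real_smul]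
    push_cast
    field_simp
    ring
  rw [cHess, Wz, Filter.EventuallyEq.fderiv_eq hev, hD u, hD (Complex.I • u),
    Amap_smul_I v u, Amap_smul_I p u, Bmap_smul_I v u, Bmap_smul_I p u]
  have hreA : (Complex.I * Amap p u).re = -(Amap p u).im := by
    simp [Complex.mul_re]
  have hreB : (Complex.I * Bmap p u).re = -(Bmap p u).im := by
    simp [Complex.mul_re]
  rw [hreA, hreB]
  push_cast
  have hA : ((Amap p u).re : ℂ) + ((Amap p u).im : ℂ) * Complex.I = Amap p u := Complex.re_add_im _
  have hB : ((Bmap p u).re : ℂ) + ((Bmap p u).im : ℂ) * Complex.I = Bmap p u := Complex.re_add_im _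
  linear_combination
    (-(1/2 : ℂ) * (-(Amap v u)/((gf p : ℝ):ℂ) +
      ((n:ℂ)+1) * ((Amap v u + Bmap v u)/((hf p : ℝ):ℂ)))) * Complex.I_sq +
    (-(Amap v p)/((gf p : ℝ):ℂ)^2 +
      ((n:ℂ)+1) * (Amap v p + Bmap v p)/((hf p : ℝ):ℂ)^2) * hA +
    (((n:ℂ)+1) * (Amap v p + Bmap v p)/((hf p : ℝ):ℂ)^2) * hB

lemma Amap_xi (q p : P m n) : Amap q (xiS1 p) = 0 := by simp [xiS1]

lemma Amap_xi' (p q : P m n) : Amap (xiS1 p) q = 0 := by simp [xiS1]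

lemma Bmap_xi (q p : P m n) : Bmap q (xiS1 p) = Complex.I * Bmap q p := by
  simp [xiS1, Finset.mul_sum]
  exact Finset.sum_congr rfl fun j _ => by ring

lemma Bmap_xi' (p q : P m n) : Bmap (xiS1 p) q = -Complex.I * Bmap p q := by
  simp [xiS1, Finset.mul_sum]
  exact Finset.sum_congr rfl fun j _ => by ring

lemma Bmap_self (p : P m n) : Bmap p p = ((gf p - hf p : ℝ) : ℂ) := by
  have : ∀ j, (starRingEnd ℂ) (p.2 j) * p.2 j = ((Complex.normSq (p.2 j) : ℝ) : ℂ) :=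
    fun j => (Complex.normSq_eq_conj_mul_self).symm ▸ rfl
  simp [gf, hf]
  push_cast
  exact Finset.sum_congr rfl fun j _ => (Complex.normSq_eq_conj_mul_self (z := p.2 j)).symm ▸ rfl

lemma fderiv_muC (c : ℝ) {p : P m n} (hH : hf p ≠ 0) (v : P m n) :
    fderiv ℝ (fun q : P m n => ((c * gf q / hf q : ℝ) : ℂ)) p v =
      (((c * (-(2*(Amap p v).re)) * hf p -
        c * gf p * (-(2*(Amap p v).re) - 2*(Bmap p v).re)) / (hf p)^2 : ℝ) : ℂ) := by
  have h1 : HasFDerivAt (fun q : P m n => c * gf q)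
      (c • (-((2:ℝ) • (Complex.reCLM.comp (Amap p))))) p := (hasFDerivAt_gf p).const_mul c
  have hinv : HasFDerivAt (fun q : P m n => (hf q)⁻¹)
      (((ContinuousLinearMap.smulRight (1 : ℝ →L[ℝ] ℝ) (-((hf p) ^ 2)⁻¹)).comp
        (-((2:ℝ) • (Complex.reCLM.comp (Amap p))) - (2:ℝ) • (Complex.reCLM.comp (Bmap p))))) p :=
    (hasFDerivAt_inv hH).comp p (hasFDerivAt_hf p)
  have h2 := h1.mul hinv
  have h3 := Complex.ofRealCLM.hasFDerivAt.comp p h2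
  have h4 : HasFDerivAt (fun q : P m n => ((c * gf q * (hf q)⁻¹ : ℝ) : ℂ))
      (Complex.ofRealCLM.comp
        ((c * gf p) • ((ContinuousLinearMap.smulRight (1 : ℝ →L[ℝ] ℝ) (-((hf p) ^ 2)⁻¹)).comp
          (-((2:ℝ) • (Complex.reCLM.comp (Amap p))) - (2:ℝ) • (Complex.reCLM.comp (Bmap p)))) +
         (hf p)⁻¹ • (c • (-((2:ℝ) • (Complex.reCLM.comp (Amap p))))))) p := h3
  simp only [div_eq_mul_inv]
  rw [h4.fderiv]
  simp only [ContinuousLinearMap.add_apply, ContinuousLinearMap.coe_comp',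
    Function.comp_apply, ContinuousLinearMap.coe_smul', Pi.smul_apply,
    ContinuousLinearMap.neg_apply, ContinuousLinearMap.smul_apply,
    ContinuousLinearMap.coe_sub', Pi.sub_apply, ContinuousLinearMap.smulRight_apply,
    ContinuousLinearMap.one_apply, Complex.reCLM_apply, Complex.ofRealCLM_apply, smul_eq_mul]
  norm_cast
  field_simp
  ring


end AuxBergman

/-- for the unit ball `D = {Σ|w|² + Σ|z|² < 1} ⊂ ℂ^{m+n}` with the
`S¹`-action rotating the `z`-coordinates, the function
`μ = −((n+1)/2)(1 − Σ|w|²)/(1 − Σ|w|² − Σ|z|²)` satisfies `dμ = ι_ξ Ω` for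
`Ω = (√-1/2)∂∂̄ log K`, where `K` is the Bergman kernel of the slice; moreover the moment
maps `μ_D`, `μ_{Dᵐ}` of the Bergman metrics of `D` and `Dᵐ` satisfy
`μ_D = −(2(m+n+1)/((m+1)(n+1))) μ_{Dᵐ} · μ`. -/
theorem ball_bergman_moment_map_and_multiplicative_relation (m n : ℕ) :
    (∀ p : P m n, (∑ i, Complex.normSq (p.1 i)) + ∑ j, Complex.normSq (p.2 j) < 1 →
      ∀ v : P m n,
        fderiv ℝ
            (fun q : P m n =>
              ((-( (n + 1 : ℝ) / 2) *
                  (1 - ∑ i, Complex.normSq (q.1 i)) /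
                  (1 - ∑ i, Complex.normSq (q.1 i) - ∑ j, Complex.normSq (q.2 j)) : ℝ) : ℂ))
            p v =
          Om
            (fun q : P m n =>
              ((Real.log ((n.factorial : ℝ) / Real.pi ^ n *
                  (1 - ∑ i, Complex.normSq (q.1 i)) /
                  (1 - ∑ i, Complex.normSq (q.1 i) - ∑ j, Complex.normSq (q.2 j)) ^ (n + 1))
                : ℝ) : ℂ))
            p (xiS1 p) v) ∧
    (∀ p : P m n, (∑ i, Complex.normSq (p.1 i)) + ∑ j, Complex.normSq (p.2 j) < 1 →
      (-( (m + n + 1 : ℝ) / 2) /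
          (1 - ∑ i, Complex.normSq (p.1 i) - ∑ j, Complex.normSq (p.2 j)) : ℝ) =
        -(2 * (m + n + 1 : ℝ) / ((m + 1) * (n + 1))) *
          (-( (m + 1 : ℝ) / 2) / (1 - ∑ i, Complex.normSq (p.1 i))) *
          (-( (n + 1 : ℝ) / 2) *
            (1 - ∑ i, Complex.normSq (p.1 i)) /
            (1 - ∑ i, Complex.normSq (p.1 i) - ∑ j, Complex.normSq (p.2 j)))) := by
  constructor
  · intro p hp v
    have hhp : 0 < hf p := by simp only [hf]; linarith
    have hC : (0:ℝ) < (n.factorial : ℝ) / Real.pi ^ n := by positivity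
    show fderiv ℝ (fun q : P m n => ((-(((n:ℝ) + 1) / 2) * gf q / hf q : ℝ) : ℂ)) p v =
      Om (fun q : P m n =>
        ((Real.log ((n.factorial : ℝ) / Real.pi ^ n * gf q / hf q ^ (n+1)) : ℝ) : ℂ)) p (xiS1 p) v
    rw [Om, keyHess _ hC hhp (xiS1 p) v, keyHess _ hC hhp v (xiS1 p),
      fderiv_muC _ (ne_of_gt hhp) v,
      Amap_xi v p, Bmap_xi v p, Amap_xi p p, Bmap_xi p p,
      Amap_xi' p v, Bmap_xi' p v, Amap_xi' p p, Bmap_xi' p p, Bmap_self p,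
      ← conj_Amap p v, ← conj_Bmap p v]
    have hconj : ∀ z : ℂ, (starRingEnd ℂ) z = (z.re:ℂ) - (z.im:ℂ)*Complex.I :=
      fun z => by simp [Complex.ext_iff]
    rw [hconj (Amap p v), hconj (Bmap p v)]
    push_cast
    have hhne : ((hf p : ℝ):ℂ) ≠ 0 := Complex.ofReal_ne_zero.mpr (ne_of_gt hhp)
    field_simp
    apply Complex.ext <;>
      simp [Complex.mul_re, Complex.mul_im, Complex.I_re, Complex.I_im,
        ← Complex.ofReal_pow] <;>
      (try ring) <;> tauto
  · intro p hp
    have h0 : (0:ℝ) ≤ ∑ j, Complex.normSq (p.2 j) :=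
      Finset.sum_nonneg fun j _ => Complex.normSq_nonneg _
    have hH : (0:ℝ) < 1 - ∑ i, Complex.normSq (p.1 i) - ∑ j, Complex.normSq (p.2 j) := by linarith
    have hG : (0:ℝ) < 1 - ∑ i, Complex.normSq (p.1 i) := by linarith
    have hm : ((m:ℝ)+1) ≠ 0 := by positivity
    have hn : ((n:ℝ)+1) ≠ 0 := by positivity
    field_simp
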